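/- arXiv:2006.07771 — 4 statements merged into one kernel-verified Lean document; each statement's English description precedes it below -/
import Mathlib

section
/- Fix σ > 0, τ > 0 and s₁ > 0, and for s₂ > 0 set d₊(s₂) = (log(s₁/s₂) + σ²τ/2)/(σ√τ) and d₋(s₂) = (log(s₁/s₂) − σ²τ/2)/(σ√τ). Then the Margrabe price V(s₂) = s₁·N(d₊(s₂)) − s₂·N(d₋(s₂)) is differentiable in s₂ on (0,∞) and its derivative (the second Delta of the Margrabe Exchange Option) is dV/ds₂ = −N(d₋(s₂)). -/
open Real Filter Topology MeasureTheory

/-- Standard normal density `N'(x) = (1/√(2π))·exp(−x²/2)`. -/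
noncomputable def stdGaussianPDF (x : ℝ) : ℝ :=
  (Real.sqrt (2 * Real.pi))⁻¹ * Real.exp (-x ^ 2 / 2)

/-- Standard normal cumulative distribution function `N`. -/
noncomputable def stdGaussianCDF (x : ℝ) : ℝ :=
  ∫ t in Set.Iic x, stdGaussianPDF t


lemma integrable_stdGaussianPDF : Integrable stdGaussianPDF := by
  have h : Integrable (fun x : ℝ => Real.exp (-(1/2 : ℝ) * x ^ 2)) :=
    integrable_exp_neg_mul_sq (by norm_num)
  have h2 := h.const_mul (Real.sqrt (2 * Real.pi))⁻¹
  refine h2.congr (Filter.Eventually.of_forall fun x => ?_)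
  unfold stdGaussianPDF; ring_nf

lemma continuous_stdGaussianPDF : Continuous stdGaussianPDF := by
  unfold stdGaussianPDF; continuity

lemma hasDerivAt_stdGaussianCDF (x : ℝ) :
    HasDerivAt stdGaussianCDF (stdGaussianPDF x) x := by
  have hint := integrable_stdGaussianPDF
  have hcont := continuous_stdGaussianPDF
  have key : stdGaussianCDF = fun y : ℝ =>
      (∫ t in Set.Iic (0:ℝ), stdGaussianPDF t) + ∫ t in (0:ℝ)..y, stdGaussianPDF t := by
    funext y
    rw [stdGaussianCDF, ← intervalIntegral.integral_Iic_sub_Iic hint.integrableOn hint.integrableOn]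
    ring
  rw [key]
  exact (intervalIntegral.integral_hasDerivAt_right (hint.intervalIntegrable)
    (hcont.stronglyMeasurableAtFilter _ _) hcont.continuousAt).const_add _


/-- The Margrabe price `V(s₂) = s₁·N(d₊(s₂)) − s₂·N(d₋(s₂))` is differentiable in `s₂` on
`(0,∞)` with derivative (the second Delta) `−N(d₋(s₂))`. -/
theorem margrabe_delta_two (σ τ s₁ : ℝ) (hσ : 0 < σ) (hτ : 0 < τ) (hs₁ : 0 < s₁) :
    ∀ s₂ : ℝ, 0 < s₂ →
      HasDerivAt
        (fun s₂ : ℝ =>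
          s₁ * stdGaussianCDF ((Real.log (s₁ / s₂) + σ ^ 2 * τ / 2) / (σ * Real.sqrt τ)) -
          s₂ * stdGaussianCDF ((Real.log (s₁ / s₂) - σ ^ 2 * τ / 2) / (σ * Real.sqrt τ)))
        (-stdGaussianCDF ((Real.log (s₁ / s₂) - σ ^ 2 * τ / 2) / (σ * Real.sqrt τ))) s₂ := by
  intro s₂ hs₂
  set k : ℝ := σ * Real.sqrt τ with hkdef
  have hk : 0 < k := mul_pos hσ (Real.sqrt_pos.mpr hτ)
  set a : ℝ := σ ^ 2 * τ / 2 with hadef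
  have hk2 : k ^ 2 = 2 * a := by
    rw [hkdef, hadef, mul_pow, Real.sq_sqrt hτ.le]; ring
  have hpos : ∀ᶠ s in 𝓝 s₂, (0:ℝ) < s := eventually_gt_nhds hs₂
  -- derivative of the log term
  have hlog : HasDerivAt (fun s : ℝ => Real.log (s₁ / s)) (-s₂⁻¹) s₂ := by
    have h : HasDerivAt (fun s : ℝ => Real.log s₁ - Real.log s) (-s₂⁻¹) s₂ := by
      exact ((hasDerivAt_const s₂ (Real.log s₁)).sub (Real.hasDerivAt_log hs₂.ne')).congr_deriv (by simp)
    refine h.congr_of_eventuallyEq (hpos.mono fun s hs => ?_)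
    show Real.log (s₁ / s) = _
    rw [Real.log_div hs₁.ne' hs.ne']
  have hdp : HasDerivAt (fun s : ℝ => (Real.log (s₁ / s) + a) / k) (-s₂⁻¹ / k) s₂ :=
    (hlog.add_const a).div_const k
  have hdm : HasDerivAt (fun s : ℝ => (Real.log (s₁ / s) - a) / k) (-s₂⁻¹ / k) s₂ :=
    (hlog.sub_const a).div_const k
  set L : ℝ := Real.log (s₁ / s₂) with hLdef
  have hNp : HasDerivAt (fun s : ℝ => stdGaussianCDF ((Real.log (s₁ / s) + a) / k))
      (stdGaussianPDF ((L + a) / k) * (-s₂⁻¹ / k)) s₂ :=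
    (hasDerivAt_stdGaussianCDF _).comp s₂ hdp
  have hNm : HasDerivAt (fun s : ℝ => stdGaussianCDF ((Real.log (s₁ / s) - a) / k))
      (stdGaussianPDF ((L - a) / k) * (-s₂⁻¹ / k)) s₂ :=
    (hasDerivAt_stdGaussianCDF _).comp s₂ hdm
  have hkey : s₁ * stdGaussianPDF ((L + a) / k) = s₂ * stdGaussianPDF ((L - a) / k) := by
    have hexp : -((L + a) / k) ^ 2 / 2 = -((L - a) / k) ^ 2 / 2 + -L := by
      clear_value k a L
      have ha' : a = k ^ 2 / 2 := by linarith
      rw [ha']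
      field_simp
      ring
    have hexpL : Real.exp (-L) = s₂ / s₁ := by
      rw [hLdef, ← Real.log_inv, inv_div, Real.exp_log (div_pos hs₂ hs₁)]
    unfold stdGaussianPDF
    rw [hexp, Real.exp_add, hexpL]
    field_simp
  have hV := (hNp.const_mul s₁).sub ((hasDerivAt_id s₂).mul hNm)
  refine hV.congr_deriv (Eq.symm ?_)
  simp only [id_eq, one_mul]
  rw [← hLdef]
  clear_value k a L
  linear_combination (s₂⁻¹ / k) * hkey
end

section
/- Fix σ > 0 and s₁, s₂ > 0, write L = log(s₁/s₂), and for τ > 0 set d₊(τ) = (L + σ²τ/2)/(σ√τ) and Γ₁₁(τ) = N'(d₊(τ))/(σ·s₁·√τ). Then Γ₁₁ is differentiable in τ on (0,∞) and its derivative (the Colour₁₁ of the Margrabe Exchange Option) equals −(Γ₁₁(τ)/(8σ²τ²))·(σ⁴τ² + 4σ²τ − 4L²). -/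
open Real Filter Topology MeasureTheory

lemma stdGaussianPDF_hasDerivAt (x : ℝ) :
    HasDerivAt stdGaussianPDF (-x * stdGaussianPDF x) x := by
  have h1 : HasDerivAt (fun y : ℝ => -y ^ 2 / 2) (-(2 * x) / 2) x := by
    simpa using ((hasDerivAt_pow 2 x).neg.div_const 2)
  have h2 := (h1.exp).const_mul (Real.sqrt (2 * Real.pi))⁻¹
  exact h2.congr_deriv (by unfold stdGaussianPDF; ring)

/-- `Γ₁₁(τ) = N'(d₊(τ))/(σ·s₁·√τ)` is differentiable in `τ` on `(0,∞)` with derivative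
(the Colour₁₁) `−(Γ₁₁(τ)/(8σ²τ²))·(σ⁴τ² + 4σ²τ − 4L²)`, where `L = log(s₁/s₂)`. -/
theorem margrabe_colour_one_one (σ s₁ s₂ : ℝ) (hσ : 0 < σ) (hs₁ : 0 < s₁) (hs₂ : 0 < s₂) :
    ∀ τ : ℝ, 0 < τ →
      HasDerivAt
        (fun τ : ℝ =>
          stdGaussianPDF ((Real.log (s₁ / s₂) + σ ^ 2 * τ / 2) / (σ * Real.sqrt τ)) /
            (σ * s₁ * Real.sqrt τ))
        (-(stdGaussianPDF ((Real.log (s₁ / s₂) + σ ^ 2 * τ / 2) / (σ * Real.sqrt τ)) /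
            (σ * s₁ * Real.sqrt τ) / (8 * σ ^ 2 * τ ^ 2)) *
          (σ ^ 4 * τ ^ 2 + 4 * σ ^ 2 * τ - 4 * Real.log (s₁ / s₂) ^ 2)) τ := by
  intro τ hτ
  set L := Real.log (s₁ / s₂) with hL
  have hsτ : 0 < Real.sqrt τ := Real.sqrt_pos.mpr hτ
  have hsq : Real.sqrt τ ^ 2 = τ := Real.sq_sqrt hτ.le
  have hsqrt : HasDerivAt Real.sqrt (1 / (2 * Real.sqrt τ)) τ :=
    Real.hasDerivAt_sqrt hτ.ne'
  have hden : HasDerivAt (fun t => σ * Real.sqrt t) (σ * (1 / (2 * Real.sqrt τ))) τ :=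
    hsqrt.const_mul σ
  have hnum : HasDerivAt (fun t : ℝ => L + σ ^ 2 * t / 2) (σ ^ 2 / 2) τ := by
    simpa using (((hasDerivAt_id τ).const_mul (σ ^ 2)).div_const 2).const_add L
  have hdenne : σ * Real.sqrt τ ≠ 0 := by positivity
  have hd : HasDerivAt (fun t : ℝ => (L + σ ^ 2 * t / 2) / (σ * Real.sqrt t))
      ((σ ^ 2 / 2 * (σ * Real.sqrt τ) -
        (L + σ ^ 2 * τ / 2) * (σ * (1 / (2 * Real.sqrt τ)))) / (σ * Real.sqrt τ) ^ 2) τ :=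
    hnum.div hden hdenne
  set d := (L + σ ^ 2 * τ / 2) / (σ * Real.sqrt τ) with hdef
  have hP : HasDerivAt (fun t : ℝ =>
      stdGaussianPDF ((L + σ ^ 2 * t / 2) / (σ * Real.sqrt t)))
      ((-d * stdGaussianPDF d) *
        ((σ ^ 2 / 2 * (σ * Real.sqrt τ) -
          (L + σ ^ 2 * τ / 2) * (σ * (1 / (2 * Real.sqrt τ)))) / (σ * Real.sqrt τ) ^ 2)) τ :=
    by have := (stdGaussianPDF_hasDerivAt d).comp τ hd; exact this
  have hq : HasDerivAt (fun t => σ * s₁ * Real.sqrt t) (σ * s₁ * (1 / (2 * Real.sqrt τ))) τ :=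
    hsqrt.const_mul (σ * s₁)
  have hqne : σ * s₁ * Real.sqrt τ ≠ 0 := by positivity
  have hf := hP.div hq hqne
  refine hf.congr_deriv ?_
  rw [hdef]
  obtain ⟨s, hs0, rfl⟩ : ∃ s : ℝ, 0 < s ∧ τ = s ^ 2 :=
    ⟨Real.sqrt τ, hsτ, hsq.symm⟩
  rw [Real.sqrt_sq hs0.le]
  set P := stdGaussianPDF ((L + σ ^ 2 * s ^ 2 / 2) / (σ * s))
  field_simp
  ring
end

section
/- Fix σ > 0 and s₁, s₂ > 0, write L = log(s₁/s₂), and for τ > 0 set d₋(τ) = (L − σ²τ/2)/(σ√τ) and Γ₂₂(τ) = N'(d₋(τ))/(σ·s₂·√τ). Then Γ₂₂ is differentiable in τ on (0,∞) and its derivative (the Colour₂₂ of the Margrabe Exchange Option) equals −(Γ₂₂(τ)/(8σ²τ²))·(σ⁴τ² + 4σ²τ − 4L²). -/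
open Real Filter Topology MeasureTheory

/-- `Γ₂₂(τ) = N'(d₋(τ))/(σ·s₂·√τ)` is differentiable in `τ` on `(0,∞)` with derivative
(the Colour₂₂) `−(Γ₂₂(τ)/(8σ²τ²))·(σ⁴τ² + 4σ²τ − 4L²)`, where `L = log(s₁/s₂)`. -/
theorem margrabe_colour_two_two (σ s₁ s₂ : ℝ) (hσ : 0 < σ) (hs₁ : 0 < s₁) (hs₂ : 0 < s₂) :
    ∀ τ : ℝ, 0 < τ →
      HasDerivAt
        (fun τ : ℝ =>
          stdGaussianPDF ((Real.log (s₁ / s₂) - σ ^ 2 * τ / 2) / (σ * Real.sqrt τ)) /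
            (σ * s₂ * Real.sqrt τ))
        (-(stdGaussianPDF ((Real.log (s₁ / s₂) - σ ^ 2 * τ / 2) / (σ * Real.sqrt τ)) /
            (σ * s₂ * Real.sqrt τ) / (8 * σ ^ 2 * τ ^ 2)) *
          (σ ^ 4 * τ ^ 2 + 4 * σ ^ 2 * τ - 4 * Real.log (s₁ / s₂) ^ 2)) τ := by

  intro τ hτ
  set L := Real.log (s₁ / s₂) with hL
  have hst : 0 < Real.sqrt τ := Real.sqrt_pos.2 hτ
  set st := Real.sqrt τ with hstdef
  have hst2 : st ^ 2 = τ := Real.sq_sqrt hτ.le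
  have hsqrt : HasDerivAt Real.sqrt (1 / (2 * st)) τ := Real.hasDerivAt_sqrt hτ.ne'
  have hu : HasDerivAt (fun t : ℝ => L - σ ^ 2 * t / 2) (-(σ ^ 2 / 2)) τ := by
    simpa using ((hasDerivAt_id τ).const_mul (σ ^ 2)).div_const 2 |>.const_sub L
  have hv : HasDerivAt (fun t : ℝ => σ * Real.sqrt t) (σ * (1 / (2 * st))) τ :=
    hsqrt.const_mul σ
  have hvne : σ * st ≠ 0 := by positivity
  have hd := hu.div hv hvne
  have he := (((hd.pow 2).neg.div_const 2)).exp
  have hw : HasDerivAt (fun t : ℝ => σ * s₂ * Real.sqrt t) (σ * s₂ * (1 / (2 * st))) τ :=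
    hsqrt.const_mul (σ * s₂)
  have hwne : σ * s₂ * st ≠ 0 := by positivity
  have hf := (he.const_mul (Real.sqrt (2 * Real.pi))⁻¹).div hw hwne
  simp only [stdGaussianPDF]
  convert hf using 1
  · rfl
  · rfl
  · rfl
  set D := (-(σ ^ 2 / 2) * (σ * st) - (L - σ ^ 2 * τ / 2) * (σ * (1 / (2 * st)))) / (σ * st) ^ 2 with hD
  simp only [Pi.div_apply, Pi.pow_apply, Pi.neg_apply]
  rw [hD, ← hstdef, ← hst2]
  have h2pi : Real.sqrt (2 * Real.pi) ≠ 0 := by positivity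
  have hstne : st ≠ 0 := hst.ne'
  have hσne : σ ≠ 0 := hσ.ne'
  have hs₂ne : s₂ ≠ 0 := hs₂.ne'
  push_cast
  field_simp
  ring
end

section
/- Fix σ > 0 and s₁, s₂ > 0, write L = log(s₁/s₂), and for τ > 0 set d₊(τ) = (L + σ²τ/2)/(σ√τ) and Γ₁₂(τ) = −N'(d₊(τ))/(σ·s₂·√τ). Then Γ₁₂ is differentiable in τ on (0,∞) and its derivative (the Colour₁₂ of the Margrabe Exchange Option) equals −(Γ₁₂(τ)/(8σ²τ²))·(σ⁴τ² + 4σ²τ − 4L²). -/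
open Real Filter Topology MeasureTheory

/-- `Γ₁₂(τ) = −N'(d₊(τ))/(σ·s₂·√τ)` is differentiable in `τ` on `(0,∞)` with derivative
(the Colour₁₂) `−(Γ₁₂(τ)/(8σ²τ²))·(σ⁴τ² + 4σ²τ − 4L²)`, where `L = log(s₁/s₂)`. -/
theorem margrabe_colour_one_two (σ s₁ s₂ : ℝ) (hσ : 0 < σ) (hs₁ : 0 < s₁) (hs₂ : 0 < s₂) :
    ∀ τ : ℝ, 0 < τ →
      HasDerivAt
        (fun τ : ℝ =>
          -(stdGaussianPDF ((Real.log (s₁ / s₂) + σ ^ 2 * τ / 2) / (σ * Real.sqrt τ)) /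
            (σ * s₂ * Real.sqrt τ)))
        (-(-(stdGaussianPDF ((Real.log (s₁ / s₂) + σ ^ 2 * τ / 2) / (σ * Real.sqrt τ)) /
            (σ * s₂ * Real.sqrt τ)) / (8 * σ ^ 2 * τ ^ 2)) *
          (σ ^ 4 * τ ^ 2 + 4 * σ ^ 2 * τ - 4 * Real.log (s₁ / s₂) ^ 2)) τ := by
  intro τ hτ
  have hτ' : τ ≠ 0 := ne_of_gt hτ
  have hst : Real.sqrt τ ≠ 0 := by positivity
  have hσ' : σ ≠ 0 := ne_of_gt hσ
  have hs₂' : s₂ ≠ 0 := ne_of_gt hs₂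
  have hsq : Real.sqrt τ ^ 2 = τ := Real.sq_sqrt hτ.le
  have hc : Real.sqrt (2 * Real.pi) ≠ 0 := by positivity
  set L := Real.log (s₁ / s₂) with hL
  set c := (Real.sqrt (2 * Real.pi))⁻¹ with hcdef
  have hS : HasDerivAt Real.sqrt (1 / (2 * Real.sqrt τ)) τ :=
    Real.hasDerivAt_sqrt hτ'
  have hnum : HasDerivAt (fun τ : ℝ => L + σ ^ 2 * τ / 2) (σ ^ 2 / 2) τ := by
    simpa using (((hasDerivAt_id τ).const_mul (σ ^ 2)).div_const 2).const_add L
  have hden : HasDerivAt (fun τ : ℝ => σ * Real.sqrt τ) (σ * (1 / (2 * Real.sqrt τ))) τ :=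
    hS.const_mul σ
  have hd : HasDerivAt (fun τ : ℝ => (L + σ ^ 2 * τ / 2) / (σ * Real.sqrt τ))
      ((σ ^ 2 / 2 * (σ * Real.sqrt τ) - (L + σ ^ 2 * τ / 2) * (σ * (1 / (2 * Real.sqrt τ)))) /
        (σ * Real.sqrt τ) ^ 2) τ :=
    hnum.div hden (by positivity)
  set d := (L + σ ^ 2 * τ / 2) / (σ * Real.sqrt τ) with hddef
  set d' := (σ ^ 2 / 2 * (σ * Real.sqrt τ) - (L + σ ^ 2 * τ / 2) * (σ * (1 / (2 * Real.sqrt τ)))) /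
        (σ * Real.sqrt τ) ^ 2 with hd'def
  have hinner : HasDerivAt
      (fun τ : ℝ => -((L + σ ^ 2 * τ / 2) / (σ * Real.sqrt τ)) ^ 2 / 2)
      (-(2 * d * d') / 2) τ := by
    have := ((hd.pow 2).neg.div_const 2)
    convert this using 1
    · rfl
    · rfl
    · rfl
    push_cast
    ring
  have hexp : HasDerivAt
      (fun τ : ℝ => Real.exp (-((L + σ ^ 2 * τ / 2) / (σ * Real.sqrt τ)) ^ 2 / 2))
      (Real.exp (-d ^ 2 / 2) * (-(2 * d * d') / 2)) τ := hinner.exp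
  have hN : HasDerivAt
      (fun τ : ℝ => c * Real.exp (-((L + σ ^ 2 * τ / 2) / (σ * Real.sqrt τ)) ^ 2 / 2))
      (c * (Real.exp (-d ^ 2 / 2) * (-(2 * d * d') / 2))) τ := hexp.const_mul c
  have hD : HasDerivAt (fun τ : ℝ => σ * s₂ * Real.sqrt τ)
      (σ * s₂ * (1 / (2 * Real.sqrt τ))) τ := hS.const_mul (σ * s₂)
  have hQ : HasDerivAt
      (fun τ : ℝ => -(c * Real.exp (-((L + σ ^ 2 * τ / 2) / (σ * Real.sqrt τ)) ^ 2 / 2) /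
        (σ * s₂ * Real.sqrt τ)))
      (-((c * (Real.exp (-d ^ 2 / 2) * (-(2 * d * d') / 2)) * (σ * s₂ * Real.sqrt τ) -
          c * Real.exp (-d ^ 2 / 2) * (σ * s₂ * (1 / (2 * Real.sqrt τ)))) /
        (σ * s₂ * Real.sqrt τ) ^ 2)) τ :=
    (hN.div hD (by positivity)).neg
  simp only [stdGaussianPDF]
  rw [← hcdef]
  convert hQ using 1
  rw [hd'def, hddef]
  set u := Real.sqrt τ with hudef
  set E := Real.exp (-((L + σ ^ 2 * τ / 2) / (σ * u)) ^ 2 / 2) with hE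
  have hc0 : c ≠ 0 := by rw [hcdef]; positivity
  have hu0 : u ≠ 0 := hst
  have hτu : τ = u ^ 2 := hsq.symm
  clear_value c E u
  rw [hτu]
  field_simp
  ring
end
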